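/- Let M,L>0 and κ>0 with κ·M ≤ π², and let W:ℝ³→ℝ satisfy |W(k)| ≤ M and |W(k)−W(0)| ≤ L·|k| for all k ∈ ℝ³. Define, for p ∈ 2πℤ³∖{0} and v ∈ ℝ, e_p(v) = −|p|² − κ·v + √(|p|⁴+2|p|²·κ·v) + κ²·v²/(2|p|²). Then for every 0<β≤1 and every 0<α<β there exists C>0 such that for all N≥1 both families (e_p(W(p/N^β)))_{p∈Λ*₊} and (e_p(W(0)))_{p∈Λ*₊} are absolutely summable and | ∑_{p∈Λ*₊} e_p(W(p/N^β)) − ∑_{p∈Λ*₊} e_p(W(0)) | ≤ C·N^{−α}. -/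

import Mathlib

open MeasureTheory Real

set_option maxHeartbeats 1000000

noncomputable section

/-- `ℝ³` as a Euclidean space. -/
abbrev E3 : Type := EuclideanSpace ℝ (Fin 3)

/-- The point `2πn` of the lattice `Λ* = 2πℤ³ ⊂ ℝ³`. -/
def latticePt (n : Fin 3 → ℤ) : E3 := WithLp.toLp 2 (fun i => 2 * π * (n i : ℝ))

/-- Index type for the punctured lattice `Λ*₊ = 2πℤ³ \ {0}`. -/
abbrev NZ : Type := {n : Fin 3 → ℤ // n ≠ 0}

/-- `e_p(v) = −|p|² − κv + √(|p|⁴+2|p|²κv) + κ²v²/(2|p|²)`. -/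
def bogE (κ : ℝ) (p : E3) (v : ℝ) : ℝ :=
  -‖p‖ ^ 2 - κ * v + Real.sqrt (‖p‖ ^ 4 + 2 * ‖p‖ ^ 2 * κ * v)
    + κ ^ 2 * v ^ 2 / (2 * ‖p‖ ^ 2)


set_option maxHeartbeats 1000000 in
set_option maxHeartbeats 2000000 in

lemma g_diff (A u₁ u₂ : ℝ) (hA : 4*π^2 ≤ A) (h1 : |u₁| ≤ π^2) (h2 : |u₂| ≤ π^2) :
    |(-A - u₁ + Real.sqrt (A^2+2*A*u₁) + u₁^2/(2*A)) -
     (-A - u₂ + Real.sqrt (A^2+2*A*u₂) + u₂^2/(2*A))| ≤ 14*π^4/A^2 * |u₁ - u₂| := by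
  have hπ : (0:ℝ) < π^2 := by positivity
  have hA0 : 0 < A := by nlinarith
  obtain ⟨h1a, h1b⟩ := abs_le.mp h1
  obtain ⟨h2a, h2b⟩ := abs_le.mp h2
  have harg1 : 0 ≤ A^2 + 2*A*u₁ := by nlinarith
  have harg2 : 0 ≤ A^2 + 2*A*u₂ := by nlinarith
  set S₁ := Real.sqrt (A^2+2*A*u₁) with hS₁
  set S₂ := Real.sqrt (A^2+2*A*u₂) with hS₂
  have hS₁sq : S₁^2 = A^2+2*A*u₁ := Real.sq_sqrt harg1
  have hS₂sq : S₂^2 = A^2+2*A*u₂ := Real.sq_sqrt harg2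
  have hS₁0 : 0 ≤ S₁ := Real.sqrt_nonneg _
  have hS₂0 : 0 ≤ S₂ := Real.sqrt_nonneg _
  have hS₁h : A/2 ≤ S₁ := by nlinarith
  have hS₂h : A/2 ≤ S₂ := by nlinarith
  have hε₁id : (S₁ - A) * (S₁ + A) = 2*A*u₁ := by linear_combination hS₁sq
  have hε₂id : (S₂ - A) * (S₂ + A) = 2*A*u₂ := by linear_combination hS₂sq
  have hε₁ : |S₁ - A| ≤ 2*|u₁| := by
    have h : |S₁ - A| * (S₁ + A) = 2*A*|u₁| := by
      rw [← abs_of_pos (show 0 < S₁ + A by linarith), ← abs_mul, hε₁id, abs_mul,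
        abs_of_pos (show (0:ℝ) < 2*A by linarith)]
    nlinarith [abs_nonneg (S₁ - A), abs_nonneg u₁]
  have hε₂ : |S₂ - A| ≤ 2*|u₂| := by
    have h : |S₂ - A| * (S₂ + A) = 2*A*|u₂| := by
      rw [← abs_of_pos (show 0 < S₂ + A by linarith), ← abs_mul, hε₂id, abs_mul,
        abs_of_pos (show (0:ℝ) < 2*A by linarith)]
    nlinarith [abs_nonneg (S₂ - A), abs_nonneg u₂]
  have hε₁' : |S₁ - A| ≤ 2*π^2 := le_trans hε₁ (by nlinarith)
  have hε₂' : |S₂ - A| ≤ 2*π^2 := le_trans hε₂ (by nlinarith)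
  obtain ⟨he1a, he1b⟩ := abs_le.mp hε₁'
  obtain ⟨he2a, he2b⟩ := abs_le.mp hε₂'
  set P := (u₁+u₂)*(S₁+S₂) - 2*A*(S₁+S₂) + 4*A^2 with hPdef
  have key : ((-A - u₁ + S₁ + u₁^2/(2*A)) - (-A - u₂ + S₂ + u₂^2/(2*A))) * (2*A*(S₁+S₂))
      = (u₁ - u₂) * P := by
    rw [hPdef]
    field_simp
    linear_combination 2*A*hS₁sq - 2*A*hS₂sq
  have q₁ : |(S₁+A)*(S₁+S₂) - 4*A^2| ≤ 14*A*π^2 := by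
    rw [abs_le]; constructor <;> nlinarith [mul_nonneg (by linarith : (0:ℝ) ≤ 2*π^2 - (S₁-A)) (by linarith : (0:ℝ) ≤ 2*π^2 - (S₂-A)),
      mul_nonneg (by linarith : (0:ℝ) ≤ 2*π^2 + (S₁-A)) (by linarith : (0:ℝ) ≤ 2*π^2 + (S₂-A)),
      mul_nonneg (by linarith : (0:ℝ) ≤ 2*π^2 - (S₁-A)) (by linarith : (0:ℝ) ≤ 2*π^2 + (S₂-A)),
      mul_nonneg (by linarith : (0:ℝ) ≤ 2*π^2 + (S₁-A)) (by linarith : (0:ℝ) ≤ 2*π^2 - (S₂-A)),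
      sq_nonneg (S₁-A), sq_nonneg (S₂-A), mul_le_mul_of_nonneg_right hA hπ.le]
  have q₂ : |(S₂+A)*(S₁+S₂) - 4*A^2| ≤ 14*A*π^2 := by
    rw [abs_le]; constructor <;> nlinarith [mul_nonneg (by linarith : (0:ℝ) ≤ 2*π^2 - (S₁-A)) (by linarith : (0:ℝ) ≤ 2*π^2 - (S₂-A)),
      mul_nonneg (by linarith : (0:ℝ) ≤ 2*π^2 + (S₁-A)) (by linarith : (0:ℝ) ≤ 2*π^2 + (S₂-A)),
      mul_nonneg (by linarith : (0:ℝ) ≤ 2*π^2 - (S₁-A)) (by linarith : (0:ℝ) ≤ 2*π^2 + (S₂-A)),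
      mul_nonneg (by linarith : (0:ℝ) ≤ 2*π^2 + (S₁-A)) (by linarith : (0:ℝ) ≤ 2*π^2 - (S₂-A)),
      sq_nonneg (S₁-A), sq_nonneg (S₂-A), mul_le_mul_of_nonneg_right hA hπ.le]
  have hP2A : P * (2*A) = (S₁-A)*((S₁+A)*(S₁+S₂)-4*A^2) + (S₂-A)*((S₂+A)*(S₁+S₂)-4*A^2) := by
    linear_combination (S₁+S₂)*hε₁id + (S₁+S₂)*hε₂id - 2*(S₁+S₂)*hS₁sq - 2*(S₁+S₂)*hS₂sq
  have hP : |P| ≤ 28*π^4 := by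
    have h' : |P| * (2*A) = |P * (2*A)| := by
      rw [abs_mul, abs_of_pos (show (0:ℝ) < 2*A by linarith)]
    have h'' : |P * (2*A)| ≤ |S₁-A| * |(S₁+A)*(S₁+S₂)-4*A^2| + |S₂-A| * |(S₂+A)*(S₁+S₂)-4*A^2| := by
      rw [hP2A]
      exact (abs_add_le _ _).trans (by rw [abs_mul, abs_mul])
    have e1 : |S₁-A| * |(S₁+A)*(S₁+S₂)-4*A^2| ≤ (2*π^2)*(14*A*π^2) :=
      mul_le_mul hε₁' q₁ (abs_nonneg _) (by positivity)
    have e2 : |S₂-A| * |(S₂+A)*(S₁+S₂)-4*A^2| ≤ (2*π^2)*(14*A*π^2) :=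
      mul_le_mul hε₂' q₂ (abs_nonneg _) (by positivity)
    have hfin : |P| * (2*A) ≤ (28*π^4) * (2*A) := by
      have hr : (2*π^2)*(14*A*π^2) + (2*π^2)*(14*A*π^2) = (28*π^4)*(2*A) := by ring
      linarith
    exact le_of_mul_le_mul_right hfin (by linarith)
  set D := (-A - u₁ + S₁ + u₁^2/(2*A)) - (-A - u₂ + S₂ + u₂^2/(2*A)) with hD
  have h2AS : (0:ℝ) < 2*A*(S₁+S₂) := by nlinarith [mul_pos hA0 (show (0:ℝ) < S₁+S₂ by linarith)]
  have habs : |D| * (2*A*(S₁+S₂)) ≤ |u₁ - u₂| * (28*π^4) := by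
    have hthis := congrArg abs key
    rw [abs_mul _ (2*A*(S₁+S₂)), abs_mul (u₁-u₂) P, abs_of_pos h2AS] at hthis
    rw [hthis]
    exact mul_le_mul_of_nonneg_left hP (abs_nonneg _)
  rw [div_mul_eq_mul_div, le_div_iff₀ (by positivity)]
  have hd1 : |D| * (2*A*A) ≤ |D| * (2*A*(S₁+S₂)) :=
    mul_le_mul_of_nonneg_left (by nlinarith : 2*A*A ≤ 2*A*(S₁+S₂)) (abs_nonneg _)
  have hr2 : |D| * (2*A*A) = (|D| * A^2) * 2 := by ring
  linarith [habs, hd1, hr2]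

def zE (n : Fin 3 → ℤ) : EuclideanSpace ℝ (Fin 3) := WithLp.toLp 2 (fun i => (n i : ℝ))

lemma coord_le_zE (n : Fin 3 → ℤ) (i : Fin 3) : |(n i : ℝ)| ≤ ‖zE n‖ := by
  rw [EuclideanSpace.norm_eq]
  rw [← Real.sqrt_sq_eq_abs]
  apply Real.sqrt_le_sqrt
  have : ((n i : ℝ))^2 = ‖zE n i‖^2 := by simp [zE]
  rw [this]
  exact Finset.single_le_sum (f := fun j => ‖zE n j‖^2) (fun j _ => by positivity)
    (Finset.mem_univ i)

lemma one_le_zE {n : Fin 3 → ℤ} (hn : n ≠ 0) : 1 ≤ ‖zE n‖ := by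
  obtain ⟨i, hi⟩ := Function.ne_iff.mp hn
  have h1 : (1:ℝ) ≤ |(n i : ℝ)| := by
    rw [← Int.cast_abs]
    exact_mod_cast Int.one_le_abs hi
  exact h1.trans (coord_le_zE n i)

lemma summable_h {t : ℝ} (ht : 1 < t) :
    Summable fun m : ℤ => (1 + |(m : ℝ)|) ^ (-t) := by
  apply Summable.of_norm_bounded_eventually (g := fun m : ℤ => |(m:ℝ)| ^ (-t))
    (Real.summable_abs_int_rpow ht)
  have hev : ∀ᶠ m : ℤ in Filter.cofinite, m ∉ ({0} : Set ℤ) :=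
    (Set.finite_singleton (0:ℤ)).eventually_cofinite_notMem
  filter_upwards [hev] with m hm
  have hm0 : (0:ℝ) < |(m:ℝ)| := by
    simp only [Set.mem_singleton_iff] at hm
    have : (m:ℝ) ≠ 0 := Int.cast_ne_zero.mpr hm
    positivity
  rw [Real.norm_of_nonneg (by positivity)]
  exact Real.rpow_le_rpow_of_nonpos hm0 (by linarith [abs_nonneg (m:ℝ)])
    (by linarith)

def e3 : (Fin 3 → ℤ) ≃ ℤ × ℤ × ℤ where
  toFun n := (n 0, n 1, n 2)
  invFun p := ![p.1, p.2.1, p.2.2]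
  left_inv n := by
    funext i
    fin_cases i <;> rfl
  right_inv p := rfl

lemma summable_prod3 {t : ℝ} (ht : 1 < t) :
    Summable fun n : Fin 3 → ℤ =>
      (1 + |((n 0 : ℤ) : ℝ)|) ^ (-t) * ((1 + |((n 1 : ℤ) : ℝ)|) ^ (-t) * (1 + |((n 2 : ℤ) : ℝ)|) ^ (-t)) := by
  have h0 : ∀ m : ℤ, 0 ≤ (1 + |(m : ℝ)|) ^ (-t) := fun m => Real.rpow_nonneg (by positivity) _
  have inner : Summable fun x : ℤ × ℤ => (1 + |(x.1 : ℝ)|) ^ (-t) * (1 + |(x.2 : ℝ)|) ^ (-t) :=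
    (summable_h ht).mul_of_nonneg (summable_h ht) h0 h0
  have outer : Summable fun x : ℤ × ℤ × ℤ =>
      (1 + |(x.1 : ℝ)|) ^ (-t) * ((1 + |(x.2.1 : ℝ)|) ^ (-t) * (1 + |(x.2.2 : ℝ)|) ^ (-t)) :=
    (summable_h ht).mul_of_nonneg inner h0 (fun x => mul_nonneg (h0 _) (h0 _))
  exact (e3.summable_iff.mpr outer).congr (fun n => rfl)

lemma summable_zE {s : ℝ} (hs : 3 < s) :
    Summable fun n : Fin 3 → ℤ => ‖zE n‖ ^ (-s) := by
  have ht : 1 < s/3 := by linarith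
  refine Summable.of_nonneg_of_le (fun n => Real.rpow_nonneg (norm_nonneg _) _)
    (fun n => ?_) ((summable_prod3 ht).mul_left ((2:ℝ)^s))
  · 
    by_cases hn : n = 0
    · subst hn
      have hz : zE 0 = 0 := by ext i; simp [zE]
      rw [hz, norm_zero, Real.zero_rpow (by linarith)]
      positivity
    · have hr1 : 1 ≤ ‖zE n‖ := one_le_zE hn
      set r := ‖zE n‖ with hrdef
      have hr0 : (0:ℝ) < 2*r := by linarith
      have hfac : ∀ i, (2*r) ^ (-(s/3)) ≤ (1 + |((n i : ℤ) : ℝ)|) ^ (-(s/3)) := by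
        intro i
        apply Real.rpow_le_rpow_of_nonpos (by positivity)
          (by linarith [coord_le_zE n i]) (by linarith)
      have hprod : (2*r) ^ (-(s/3)) * ((2*r) ^ (-(s/3)) * (2*r) ^ (-(s/3)))
          ≤ (1 + |((n 0 : ℤ) : ℝ)|) ^ (-(s/3)) *
            ((1 + |((n 1 : ℤ) : ℝ)|) ^ (-(s/3)) * (1 + |((n 2 : ℤ) : ℝ)|) ^ (-(s/3))) := by
        have hnn : (0:ℝ) ≤ (2*r) ^ (-(s/3)) := Real.rpow_nonneg hr0.le _
        apply mul_le_mul (hfac 0) (mul_le_mul (hfac 1) (hfac 2) hnn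
          (Real.rpow_nonneg (by positivity) _)) (mul_nonneg hnn hnn)
          (Real.rpow_nonneg (by positivity) _)
      have hcollect : (2*r) ^ (-(s/3)) * ((2*r) ^ (-(s/3)) * (2*r) ^ (-(s/3))) = (2*r) ^ (-s) := by
        rw [← Real.rpow_add hr0, ← Real.rpow_add hr0]
        congr 1
        ring
      have hsplit : (2*r) ^ (-s) = 2^(-s) * r^(-s) :=
        Real.mul_rpow (by norm_num) (by linarith)
      have h2s : (2:ℝ)^s * (2:ℝ)^(-s) = 1 := by
        rw [← Real.rpow_add (by norm_num)]; norm_num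
      calc r ^ (-s) = (2:ℝ)^s * ((2*r) ^ (-(s/3)) * ((2*r) ^ (-(s/3)) * (2*r) ^ (-(s/3)))) := by
            rw [hcollect, hsplit, ← mul_assoc, h2s, one_mul]
        _ ≤ _ := mul_le_mul_of_nonneg_left hprod (by positivity)

lemma min_le_interp {x y θ : ℝ} (hx : 0 ≤ x) (hy : 0 ≤ y) (h0 : 0 < θ) (h1 : θ < 1) :
    min x y ≤ x ^ θ * y ^ (1 - θ) := by
  rcases eq_or_lt_of_le hx with hx0 | hx0
  · have : min x y ≤ 0 := le_trans (min_le_left _ _) hx0.ge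
    exact this.trans (by positivity)
  rcases eq_or_lt_of_le hy with hy0 | hy0
  · have : min x y ≤ 0 := le_trans (min_le_right _ _) hy0.ge
    exact this.trans (by positivity)
  have hm : 0 < min x y := lt_min hx0 hy0
  have : min x y = (min x y) ^ θ * (min x y) ^ (1 - θ) := by
    rw [← Real.rpow_add hm]; norm_num
  rw [this]
  exact mul_le_mul (Real.rpow_le_rpow hm.le (min_le_left _ _) h0.le)
    (Real.rpow_le_rpow hm.le (min_le_right _ _) (by linarith)) (by positivity) (by positivity)

lemma latticePt_smul (n : Fin 3 → ℤ) : latticePt n = (2*π) • zE n := by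
  ext i
  simp [latticePt, zE]

lemma norm_latticePt (n : Fin 3 → ℤ) : ‖latticePt n‖ = 2*π * ‖zE n‖ := by
  rw [latticePt_smul, norm_smul, Real.norm_eq_abs, abs_of_pos (by positivity : (0:ℝ) < 2*π)]

lemma two_pi_le_latticePt {n : Fin 3 → ℤ} (hn : n ≠ 0) : 2*π ≤ ‖latticePt n‖ := by
  rw [norm_latticePt]
  nlinarith [one_le_zE hn, pi_pos]

lemma summable_lat {s : ℝ} (hs : 3 < s) :
    Summable fun n : NZ => ‖latticePt n.1‖ ^ (-s) := by
  have h := (summable_zE hs).subtype {n : Fin 3 → ℤ | n ≠ 0}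
  have h' : Summable fun n : NZ => (2*π)^(-s) * ‖zE n.1‖ ^ (-s) :=
    Summable.mul_left _ h
  apply h'.congr
  intro n
  rw [norm_latticePt, Real.mul_rpow (by positivity) (norm_nonneg _)]

lemma rpow_neg_four (p : E3) : ‖p‖ ^ (-(4:ℝ)) = (‖p‖^4)⁻¹ := by
  rw [Real.rpow_neg (norm_nonneg _), show ((4:ℝ)) = ((4:ℕ):ℝ) by norm_num,
    Real.rpow_natCast]

lemma bogE_eq (κ : ℝ) (p : E3) (v : ℝ) :
    bogE κ p v = -(‖p‖^2) - κ*v + Real.sqrt ((‖p‖^2)^2 + 2*(‖p‖^2)*(κ*v))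
      + (κ*v)^2/(2*(‖p‖^2)) := by
  unfold bogE
  rw [show (‖p‖^2)^2 + 2*(‖p‖^2)*(κ*v) = ‖p‖^4 + 2*‖p‖^2*κ*v by ring]
  ring

lemma bogE_zero (κ : ℝ) (p : E3) : bogE κ p 0 = 0 := by
  unfold bogE
  rw [show ‖p‖^4 + 2*‖p‖^2*κ*0 = (‖p‖^2)^2 by ring, Real.sqrt_sq (by positivity)]
  ring

lemma bogE_diff (κ : ℝ) (p : E3) (hp : 2*π ≤ ‖p‖) (v₁ v₂ : ℝ)
    (h1 : |κ*v₁| ≤ π^2) (h2 : |κ*v₂| ≤ π^2) :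
    |bogE κ p v₁ - bogE κ p v₂| ≤ 14*π^4/‖p‖^4 * |κ*v₁ - κ*v₂| := by
  have hp2 : 4*π^2 ≤ ‖p‖^2 := by nlinarith [pi_pos]
  have h := g_diff (‖p‖^2) (κ*v₁) (κ*v₂) hp2 h1 h2
  rw [← bogE_eq, ← bogE_eq, show (‖p‖^2)^2 = ‖p‖^4 by ring] at h
  exact h

lemma bogE_le (M κ : ℝ) (hκ : 0 < κ) (hκM : κ*M ≤ π^2) (p : E3) (hp : 2*π ≤ ‖p‖)
    (v : ℝ) (hv : |v| ≤ M) :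
    |bogE κ p v| ≤ (14*π^4*κ*M) * ‖p‖ ^ (-(4:ℝ)) := by
  have hM0 : 0 ≤ M := le_trans (abs_nonneg v) hv
  have hp0 : 0 < ‖p‖ := lt_of_lt_of_le (by positivity) hp
  have hκv : |κ*v| ≤ π^2 := by
    rw [abs_mul, abs_of_pos hκ]
    calc κ * |v| ≤ κ * M := by nlinarith
      _ ≤ π^2 := hκM
  have h := bogE_diff κ p hp v 0 hκv (by simpa using (by positivity : (0:ℝ) ≤ π^2))
  rw [bogE_zero, sub_zero, mul_zero, sub_zero, abs_mul, abs_of_pos hκ] at h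
  rw [rpow_neg_four]
  calc |bogE κ p v| ≤ 14*π^4/‖p‖^4 * (κ * |v|) := h
    _ ≤ 14*π^4/‖p‖^4 * (κ * M) := by
        apply mul_le_mul_of_nonneg_left (by nlinarith) (by positivity)
    _ = (14*π^4*κ*M) * (‖p‖^4)⁻¹ := by field_simp

/-- for bounded Lipschitz-at-`0` `W` with `κM ≤ π²`, and `0 < β ≤ 1`,
`0 < α < β`, there is `C > 0` such that for all `N ≥ 1` the families `(e_p(W(p/N^β)))_p`
and `(e_p(W(0)))_p` are absolutely summable and their sums differ by at most `C·N^{−α}`. -/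
theorem statement_13 (M L κ : ℝ) (hM : 0 < M) (hL : 0 < L) (hκ : 0 < κ)
    (hκM : κ * M ≤ π ^ 2) (W : E3 → ℝ)
    (hWb : ∀ k : E3, |W k| ≤ M) (hWL : ∀ k : E3, |W k - W 0| ≤ L * ‖k‖)
    (β : ℝ) (hβ0 : 0 < β) (hβ1 : β ≤ 1) (α : ℝ) (hα0 : 0 < α) (hαβ : α < β) :
    ∃ C > 0, ∀ N : ℕ, 1 ≤ N →
      Summable (fun n : NZ =>
        bogE κ (latticePt n.1) (W (((N : ℝ) ^ β)⁻¹ • latticePt n.1))) ∧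
      Summable (fun n : NZ => bogE κ (latticePt n.1) (W 0)) ∧
      |(∑' n : NZ, bogE κ (latticePt n.1) (W (((N : ℝ) ^ β)⁻¹ • latticePt n.1)))
          - ∑' n : NZ, bogE κ (latticePt n.1) (W 0)|
        ≤ C * (N : ℝ) ^ (-α) := by
  classical
  set θ := α/β with hθdef
  have hθ0 : 0 < θ := div_pos hα0 hβ0
  have hθ1 : θ < 1 := (div_lt_one hβ0).mpr hαβ
  have hβθ : β*θ = α := by
    rw [hθdef, mul_div_cancel₀ _ (ne_of_gt hβ0)]
  have hsθ : (3:ℝ) < 4 - θ := by linarith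
  set K := 14*π^4 * κ * (L^θ * (2*M)^(1-θ)) with hKdef
  have hK0 : 0 < K := by positivity
  have hTsum : Summable fun n : NZ => ‖latticePt n.1‖ ^ (θ - 4) := by
    have := summable_lat hsθ
    simpa [show -(4 - θ) = θ - 4 by ring] using this
  set T := ∑' n : NZ, ‖latticePt n.1‖ ^ (θ - 4) with hTdef
  have hT0 : 0 ≤ T := tsum_nonneg (fun n => Real.rpow_nonneg (norm_nonneg _) _)
  refine ⟨K*T + 1, by nlinarith, fun N hN => ?_⟩
  have hN0 : (0:ℝ) < (N:ℝ) := by exact_mod_cast Nat.lt_of_lt_of_le Nat.zero_lt_one hN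
  have hNβ : (0:ℝ) < (N:ℝ)^β := Real.rpow_pos_of_pos hN0 β
  have hNα : (0:ℝ) ≤ (N:ℝ)^(-α) := le_of_lt (Real.rpow_pos_of_pos hN0 _)
  have hlat4 : Summable fun n : NZ => ‖latticePt n.1‖ ^ (-(4:ℝ)) := summable_lat (by norm_num)
  have hsa : Summable (fun n : NZ =>
      bogE κ (latticePt n.1) (W (((N : ℝ) ^ β)⁻¹ • latticePt n.1))) := by
    apply Summable.of_norm_bounded (hlat4.mul_left (14*π^4*κ*M))
    intro n
    rw [Real.norm_eq_abs]
    exact bogE_le M κ hκ hκM _ (two_pi_le_latticePt n.2) _ (hWb _)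
  have hsb : Summable (fun n : NZ => bogE κ (latticePt n.1) (W 0)) := by
    apply Summable.of_norm_bounded (hlat4.mul_left (14*π^4*κ*M))
    intro n
    rw [Real.norm_eq_abs]
    exact bogE_le M κ hκ hκM _ (two_pi_le_latticePt n.2) _ (hWb _)
  refine ⟨hsa, hsb, ?_⟩
  have hterm : ∀ n : NZ,
      |bogE κ (latticePt n.1) (W (((N : ℝ) ^ β)⁻¹ • latticePt n.1))
        - bogE κ (latticePt n.1) (W 0)|
      ≤ K * ‖latticePt n.1‖ ^ (θ - 4) * (N:ℝ)^(-α) := by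
    intro n
    set p := latticePt n.1 with hpdef
    set kk : E3 := ((N : ℝ) ^ β)⁻¹ • p with hkkdef
    have hp : 2*π ≤ ‖p‖ := two_pi_le_latticePt n.2
    have hp0 : 0 < ‖p‖ := lt_of_lt_of_le (by positivity) hp
    have hκv₁ : |κ * W kk| ≤ π^2 := by
      rw [abs_mul, abs_of_pos hκ]
      calc κ * |W kk| ≤ κ * M := by nlinarith [hWb kk]
        _ ≤ π^2 := hκM
    have hκv₂ : |κ * W 0| ≤ π^2 := by
      rw [abs_mul, abs_of_pos hκ]
      calc κ * |W 0| ≤ κ * M := by nlinarith [hWb (0:E3)]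
        _ ≤ π^2 := hκM
    have hd := bogE_diff κ p hp (W kk) (W 0) hκv₁ hκv₂
    rw [← mul_sub, abs_mul, abs_of_pos hκ] at hd
    have hknorm : ‖kk‖ = ((N:ℝ)^β)⁻¹ * ‖p‖ := by
      rw [hkkdef, norm_smul, Real.norm_eq_abs,
        abs_of_pos (by positivity : (0:ℝ) < ((N:ℝ)^β)⁻¹)]
    have hW2M : |W kk - W 0| ≤ min (L * ‖kk‖) (2*M) := by
      refine le_min (hWL _) ?_
      calc |W kk - W 0| ≤ |W kk| + |W 0| := abs_sub _ _
        _ ≤ M + M := add_le_add (hWb _) (hWb _)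
        _ = 2*M := by ring
    have hWinterp : |W kk - W 0| ≤ (L * ‖kk‖)^θ * (2*M)^(1-θ) :=
      hW2M.trans (min_le_interp (by positivity) (by positivity) hθ0 hθ1)
    have hNθ : (((N:ℝ)^β)⁻¹)^θ = (N:ℝ)^(-α) := by
      rw [Real.inv_rpow hNβ.le, ← Real.rpow_mul hN0.le, hβθ, ← Real.rpow_neg hN0.le]
    have hLk : (L * ‖kk‖)^θ = L^θ * ((N:ℝ)^(-α) * ‖p‖^θ) := by
      rw [hknorm, Real.mul_rpow hL.le (by positivity),
        Real.mul_rpow (by positivity) (norm_nonneg _), hNθ]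
    have hsplit : ‖p‖^(θ-(4:ℝ)) = ‖p‖^θ * (‖p‖^4)⁻¹ := by
      rw [show θ-(4:ℝ) = θ + -(4:ℝ) by ring, Real.rpow_add hp0, rpow_neg_four]
    have hp4 : (0:ℝ) < ‖p‖^4 := by positivity
    calc |bogE κ p (W kk) - bogE κ p (W 0)|
        ≤ 14*π^4/‖p‖^4 * (κ * |W kk - W 0|) := hd
      _ ≤ 14*π^4/‖p‖^4 * (κ * ((L * ‖kk‖)^θ * (2*M)^(1-θ))) := by
          apply mul_le_mul_of_nonneg_left _ (by positivity)
          exact mul_le_mul_of_nonneg_left hWinterp hκ.le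
      _ = K * ‖p‖ ^ (θ - 4) * (N:ℝ)^(-α) := by
          rw [hLk, hsplit, hKdef]
          field_simp
  have hmaj : Summable fun n : NZ => K * ‖latticePt n.1‖ ^ (θ - 4) * (N:ℝ)^(-α) :=
    (hTsum.mul_left K).mul_right _
  have hdiff : Summable fun n : NZ =>
      bogE κ (latticePt n.1) (W (((N : ℝ) ^ β)⁻¹ • latticePt n.1))
        - bogE κ (latticePt n.1) (W 0) := hsa.sub hsb
  have hdiffabs : Summable fun n : NZ =>
      |bogE κ (latticePt n.1) (W (((N : ℝ) ^ β)⁻¹ • latticePt n.1))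
        - bogE κ (latticePt n.1) (W 0)| :=
    Summable.of_nonneg_of_le (fun n => abs_nonneg _) hterm hmaj
  rw [← Summable.tsum_sub hsa hsb]
  calc |∑' n : NZ, (bogE κ (latticePt n.1) (W (((N : ℝ) ^ β)⁻¹ • latticePt n.1))
          - bogE κ (latticePt n.1) (W 0))|
      ≤ ∑' n : NZ, |bogE κ (latticePt n.1) (W (((N : ℝ) ^ β)⁻¹ • latticePt n.1))
          - bogE κ (latticePt n.1) (W 0)| := by
        have h := norm_tsum_le_tsum_norm (f := fun n : NZ =>
          bogE κ (latticePt n.1) (W (((N : ℝ) ^ β)⁻¹ • latticePt n.1))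
            - bogE κ (latticePt n.1) (W 0)) (by simpa [Real.norm_eq_abs] using hdiffabs)
        simpa [Real.norm_eq_abs] using h
    _ ≤ ∑' n : NZ, K * ‖latticePt n.1‖ ^ (θ - 4) * (N:ℝ)^(-α) :=
        Summable.tsum_le_tsum hterm hdiffabs hmaj
    _ = (K * T) * (N:ℝ)^(-α) := by
        rw [tsum_mul_right, ← tsum_mul_left]
    _ ≤ (K*T + 1) * (N:ℝ)^(-α) := by nlinarith
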